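/- Let f be a Schwartz function on ℝ⁶ = ℝ³_x × ℝ³_ξ, and let Op_f be its Weyl quantization with kernel Op_f(x,y) = ∫_{ℝ³} e^{-2πi(y-x)·ξ} f((x+y)/2, hξ) dξ where h = 2πħ. Then the Wick quantization equals the Weyl quantization of the Gaussian-mollified symbol: Õp_f = Op_{g_h * f}, where g_h(z) = (πħ)^{-3} e^{-|z|²/ħ}. -/

import Mathlib

open MeasureTheory Real SchwartzMap

noncomputable section

abbrev E3 := EuclideanSpace ℝ (Fin 3)

def coherentState (hb : ℝ) (z : E3 × E3) (y : E3) : ℂ :=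
  (((π * hb) ^ (-(3 : ℝ) / 4) : ℝ) : ℂ)
    * Complex.exp (((-‖y - z.1‖ ^ 2 / (2 * hb) : ℝ)) : ℂ)
    * Complex.exp (Complex.I * ((@inner ℝ _ _ y z.2 : ℝ) : ℂ) / (hb : ℂ))

def gaussianPS (hb : ℝ) (z : E3 × E3) : ℝ :=
  (π * hb) ^ (-(3 : ℝ)) * Real.exp (-(‖z.1‖ ^ 2 + ‖z.2‖ ^ 2) / hb)

/-- Weyl quantization kernel of a symbol `u`:
`Op_u(x,y) = ∫ e^{-2πi(y-x)·ξ} u((x+y)/2, hξ) dξ` with `h = 2π hb`. -/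
def weylKernel (hb : ℝ) (u : E3 × E3 → ℂ) (x y : E3) : ℂ :=
  ∫ ξ : E3, Complex.exp (-2 * π * Complex.I * ((@inner ℝ _ _ (y - x) ξ : ℝ) : ℂ))
    * u ((1 / 2 : ℝ) • (x + y), (2 * π * hb) • ξ)

open Complex in
open scoped RealInnerProductSpace in
lemma smul_norm_id (hb : ℝ) (hhb : 0 < hb) (ξ p : E3) :
    ‖(2 * π * hb) • ξ - p‖ ^ 2 / hb
      = (4 * π ^ 2 * hb) * ‖ξ - (2 * π * hb)⁻¹ • p‖ ^ 2 := by
  have h : (0:ℝ) < 2 * π * hb := by positivity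
  have : (2 * π * hb) • ξ - p = (2 * π * hb) • (ξ - (2 * π * hb)⁻¹ • p) := by
    rw [smul_sub, smul_inv_smul₀ h.ne']
  rw [this, norm_smul, Real.norm_eq_abs, abs_of_pos h, mul_pow]
  field_simp; ring

open Complex in
open scoped RealInnerProductSpace in
lemma xi_integral (hb : ℝ) (hhb : 0 < hb) (v p : E3) :
    (∫ ξ : E3, Complex.exp (-2 * π * Complex.I * ((⟪v, ξ⟫ : ℝ) : ℂ))
      * Complex.exp (((-(‖(2 * π * hb) • ξ - p‖ ^ 2) / hb : ℝ) : ℂ)))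
    = (((4 * π * hb) ^ (-(3:ℝ)/2) : ℝ) : ℂ)
      * Complex.exp (((-(‖v‖^2) / (4*hb) : ℝ) : ℂ))
      * Complex.exp (-Complex.I * ((⟪v, p⟫ : ℝ) : ℂ) / hb) := by
  have h2 : (0:ℝ) < 2 * π * hb := by positivity
  set c : E3 := (2 * π * hb)⁻¹ • p with hc
  have hshift := MeasureTheory.integral_add_right_eq_self (μ := volume)
    (fun ξ : E3 => Complex.exp (-2 * π * Complex.I * ((⟪v, ξ⟫ : ℝ) : ℂ))
      * Complex.exp (((-(‖(2 * π * hb) • ξ - p‖ ^ 2) / hb : ℝ) : ℂ))) c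
  rw [← hshift]
  have key : ∀ ξ : E3,
      Complex.exp (-2 * π * Complex.I * ((⟪v, ξ + c⟫ : ℝ) : ℂ))
        * Complex.exp (((-(‖(2 * π * hb) • (ξ + c) - p‖ ^ 2) / hb : ℝ) : ℂ))
      = Complex.exp (-(4 * π^2 * hb : ℝ) * (‖ξ‖:ℂ)^2 + (-2 * π * Complex.I) * ((⟪v, ξ⟫ : ℝ) : ℂ))
        * Complex.exp (-Complex.I * ((⟪v, p⟫ : ℝ) : ℂ) / hb) := by
    intro ξ
    have h1 : (2 * π * hb) • (ξ + c) - p = (2 * π * hb) • ξ := by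
      rw [smul_add, hc, smul_inv_smul₀ h2.ne', add_sub_cancel_right]
    have h3 : ‖(2 * π * hb) • ξ‖ ^ 2 = (2 * π * hb)^2 * ‖ξ‖^2 := by
      rw [norm_smul, Real.norm_eq_abs, abs_of_pos h2, mul_pow]
    have h4 : ⟪v, ξ + c⟫ = ⟪v, ξ⟫ + (2 * π * hb)⁻¹ * ⟪v, p⟫ := by
      rw [inner_add_right, hc, real_inner_smul_right]
    rw [h1, h3, h4, ← Complex.exp_add, ← Complex.exp_add]
    congr 1
    have hπ : (π:ℂ) ≠ 0 := by exact_mod_cast Real.pi_ne_zero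
    have hhb' : (hb:ℂ) ≠ 0 := by exact_mod_cast hhb.ne'
    push_cast
    field_simp
    ring
  simp_rw [key]
  rw [MeasureTheory.integral_mul_const]
  have hb' : (0:ℝ) < (((4 * π^2 * hb : ℝ) : ℂ)).re := by
    rw [Complex.ofReal_re]; positivity
  rw [GaussianFourier.integral_cexp_neg_mul_sq_norm_add hb' (-2 * π * Complex.I) v]
  rw [finrank_euclideanSpace_fin]
  have hexp : ((-2 * ↑π * Complex.I)^2 * (‖v‖:ℂ)^2 / (4 * ((4 * π^2 * hb : ℝ) : ℂ)))
      = (((-(‖v‖^2) / (4*hb) : ℝ) : ℂ)) := by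
    have hIsq : (-2 * (π:ℂ) * Complex.I)^2 = -(4*(π:ℂ)^2) := by
      rw [mul_pow, mul_pow, Complex.I_sq]; ring
    have hne : (4 : ℂ) * ((4 * π^2 * hb : ℝ) : ℂ) ≠ 0 := by
      have : (0:ℝ) < 4 * π^2 * hb := by positivity
      simp only [ne_eq, mul_eq_zero, Complex.ofReal_eq_zero, not_or]
      push_cast
      norm_num
      exact hhb.ne'
    have hhb' : (hb:ℂ) ≠ 0 := by exact_mod_cast hhb.ne'
    rw [div_eq_iff hne, hIsq]
    push_cast
    field_simp
  rw [hexp]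
  have hpow : ((π:ℂ) / ((4 * π^2 * hb : ℝ) : ℂ)) ^ ((3:ℕ) / 2 : ℂ)
      = (((4 * π * hb) ^ (-(3:ℝ)/2) : ℝ) : ℂ) := by
    have h4 : (0:ℝ) < 4 * π * hb := by positivity
    have : ((π:ℂ) / ((4 * π^2 * hb : ℝ) : ℂ)) = (((4 * π * hb)⁻¹ : ℝ) : ℂ) := by
      have hπ : (π:ℂ) ≠ 0 := by exact_mod_cast Real.pi_ne_zero
      have hhb' : (hb:ℂ) ≠ 0 := by exact_mod_cast hhb.ne'
      push_cast
      field_simp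
    rw [this, neg_div, Real.rpow_neg h4.le, ← Real.inv_rpow h4.le,
      Complex.ofReal_cpow (by positivity) ((3:ℝ)/2)]
    norm_num
  rw [hpow]

lemma midpoint_norm (x y q : E3) :
    ‖x - q‖ ^ 2 + ‖y - q‖ ^ 2
      = 2 * ‖(1/2 : ℝ) • (x + y) - q‖ ^ 2 + ‖x - y‖ ^ 2 / 2 := by
  have hm : (1/2 : ℝ) • (x + y) - q = (1/2 : ℝ) • ((x - q) + (y - q)) := by
    module
  have hxy : x - y = (x - q) - (y - q) := by abel
  rw [hm, hxy]
  generalize x - q = a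
  generalize y - q = b
  rw [norm_smul, mul_pow, norm_add_sq_real, norm_sub_sq_real,
    Real.norm_eq_abs, abs_of_pos (by norm_num : (0:ℝ) < 1/2)]
  ring

lemma const_eq (hb : ℝ) (hhb : 0 < hb) :
    (2 * π * hb) ^ (-(3:ℝ)) * ((π * hb) ^ (-(3:ℝ)/4) * (π * hb) ^ (-(3:ℝ)/4))
      = (π * hb) ^ (-(3:ℝ)) * (4 * π * hb) ^ (-(3:ℝ)/2) := by
  have hπh : (0:ℝ) < π * hb := by positivity
  have h1 : (π * hb) ^ (-(3:ℝ)/4) * (π * hb) ^ (-(3:ℝ)/4) = (π * hb) ^ (-(3:ℝ)/2) := by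
    rw [← Real.rpow_add hπh]; norm_num
  have h2 : (2 * π * hb) ^ (-(3:ℝ)) = 2 ^ (-(3:ℝ)) * (π * hb) ^ (-(3:ℝ)) := by
    rw [mul_assoc, Real.mul_rpow (by norm_num) hπh.le]
  have h3 : (4 * π * hb) ^ (-(3:ℝ)/2) = 4 ^ (-(3:ℝ)/2) * (π * hb) ^ (-(3:ℝ)/2) := by
    rw [mul_assoc, Real.mul_rpow (by norm_num) hπh.le]
  have h4 : (4:ℝ) ^ (-(3:ℝ)/2) = 2 ^ (-(3:ℝ)) := by
    have h40 : (4:ℝ) = 2 ^ (2:ℝ) := by norm_num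
    rw [h40, ← Real.rpow_mul (by norm_num : (0:ℝ) ≤ 2)]
    norm_num
  rw [h1, h2, h3, h4]
  ring

open scoped RealInnerProductSpace in
lemma conj_cs (hb : ℝ) (z : E3 × E3) (y : E3) :
    (starRingEnd ℂ) (coherentState hb z y)
      = (((π * hb) ^ (-(3:ℝ)/4) : ℝ) : ℂ)
        * Complex.exp (((-‖y - z.1‖ ^ 2 / (2 * hb) : ℝ)) : ℂ)
        * Complex.exp (-(Complex.I * ((⟪y, z.2⟫ : ℝ) : ℂ) / hb)) := by
  simp only [coherentState, map_mul, map_div₀, Complex.conj_ofReal, ← Complex.exp_conj,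
    Complex.conj_I]
  ring_nf

open scoped RealInnerProductSpace in
lemma pointwise_key (hb : ℝ) (hhb : 0 < hb) (x y : E3) (z : E3 × E3) (F : ℂ) :
    (((2 * π * hb) ^ (-(3:ℝ)) : ℝ) : ℂ)
        * (F * coherentState hb z x * (starRingEnd ℂ) (coherentState hb z y))
      = ((((π * hb) ^ (-(3:ℝ)) * Real.exp (-(‖(1/2:ℝ) • (x + y) - z.1‖ ^ 2) / hb)) : ℝ) : ℂ) * F
        * ((((4 * π * hb) ^ (-(3:ℝ)/2) : ℝ) : ℂ)
            * Complex.exp (((-(‖y - x‖ ^ 2) / (4 * hb) : ℝ) : ℂ))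
            * Complex.exp (-Complex.I * ((⟪y - x, z.2⟫ : ℝ) : ℂ) / hb)) := by
  rw [conj_cs, coherentState, Complex.ofReal_mul, Complex.ofReal_exp]
  have hconst : ((((2 * π * hb) ^ (-(3:ℝ)) : ℝ)) : ℂ)
        * ((((π * hb) ^ (-(3:ℝ)/4) : ℝ)) : ℂ) * ((((π * hb) ^ (-(3:ℝ)/4) : ℝ)) : ℂ)
      = ((((π * hb) ^ (-(3:ℝ)) : ℝ)) : ℂ) * ((((4 * π * hb) ^ (-(3:ℝ)/2) : ℝ)) : ℂ) := by
    rw [← Complex.ofReal_mul, ← Complex.ofReal_mul, ← Complex.ofReal_mul, mul_assoc]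
    exact_mod_cast congrArg (fun t : ℝ => (t : ℂ)) (const_eq hb hhb)
  have hgauss : Complex.exp (((-‖x - z.1‖ ^ 2 / (2 * hb) : ℝ)) : ℂ)
        * Complex.exp (((-‖y - z.1‖ ^ 2 / (2 * hb) : ℝ)) : ℂ)
      = Complex.exp (((-(‖(1/2:ℝ) • (x + y) - z.1‖ ^ 2) / hb : ℝ)) : ℂ)
        * Complex.exp (((-(‖y - x‖ ^ 2) / (4 * hb) : ℝ)) : ℂ) := by
    rw [← Complex.exp_add, ← Complex.exp_add, ← Complex.ofReal_add, ← Complex.ofReal_add]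
    congr 2
    have hmn := midpoint_norm x y z.1
    rw [norm_sub_rev x y] at hmn
    linear_combination (-(1/(2*hb))) * hmn
  have hphase : Complex.exp (Complex.I * ((⟪x, z.2⟫ : ℝ) : ℂ) / hb)
        * Complex.exp (-(Complex.I * ((⟪y, z.2⟫ : ℝ) : ℂ) / hb))
      = Complex.exp (-Complex.I * ((⟪y - x, z.2⟫ : ℝ) : ℂ) / hb) := by
    rw [← Complex.exp_add]
    congr 1
    rw [inner_sub_left]
    push_cast
    ring
  linear_combination
    (F * Complex.exp (((-‖x - z.1‖ ^ 2 / (2 * hb) : ℝ)) : ℂ)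
      * Complex.exp (((-‖y - z.1‖ ^ 2 / (2 * hb) : ℝ)) : ℂ)
      * Complex.exp (Complex.I * ((⟪x, z.2⟫ : ℝ) : ℂ) / hb)
      * Complex.exp (-(Complex.I * ((⟪y, z.2⟫ : ℝ) : ℂ) / hb))) * hconst
    + (F * ((((π * hb) ^ (-(3:ℝ)) : ℝ)) : ℂ) * ((((4 * π * hb) ^ (-(3:ℝ)/2) : ℝ)) : ℂ)
      * Complex.exp (Complex.I * ((⟪x, z.2⟫ : ℝ) : ℂ) / hb)
      * Complex.exp (-(Complex.I * ((⟪y, z.2⟫ : ℝ) : ℂ) / hb))) * hgauss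
    + (F * ((((π * hb) ^ (-(3:ℝ)) : ℝ)) : ℂ) * ((((4 * π * hb) ^ (-(3:ℝ)/2) : ℝ)) : ℂ)
      * Complex.exp (((-(‖(1/2:ℝ) • (x + y) - z.1‖ ^ 2) / hb : ℝ)) : ℂ)
      * Complex.exp (((-(‖y - x‖ ^ 2) / (4 * hb) : ℝ)) : ℂ)) * hphase

open scoped RealInnerProductSpace in
lemma inner_int (hb : ℝ) (hhb : 0 < hb) (x y : E3) (w' : E3 × E3) (F : ℂ) :
    (∫ ξ : E3, Complex.exp (-2 * π * Complex.I * ((⟪y - x, ξ⟫ : ℝ) : ℂ))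
      * ((((gaussianPS hb (((1/2:ℝ) • (x + y), (2 * π * hb) • ξ) - w')) : ℝ) : ℂ) * F))
    = ((((π * hb) ^ (-(3:ℝ)) * Real.exp (-(‖(1/2:ℝ) • (x + y) - w'.1‖ ^ 2) / hb)) : ℝ) : ℂ) * F
      * ((((4 * π * hb) ^ (-(3:ℝ)/2) : ℝ) : ℂ)
        * Complex.exp (((-(‖y - x‖ ^ 2) / (4 * hb) : ℝ) : ℂ))
        * Complex.exp (-Complex.I * ((⟪y - x, w'.2⟫ : ℝ) : ℂ) / hb)) := by
  have step : ∀ ξ : E3,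
      Complex.exp (-2 * π * Complex.I * ((⟪y - x, ξ⟫ : ℝ) : ℂ))
        * ((((gaussianPS hb (((1/2:ℝ) • (x + y), (2 * π * hb) • ξ) - w')) : ℝ) : ℂ) * F)
      = (((((π * hb) ^ (-(3:ℝ)) * Real.exp (-(‖(1/2:ℝ) • (x + y) - w'.1‖ ^ 2) / hb)) : ℝ) : ℂ) * F)
        * (Complex.exp (-2 * π * Complex.I * ((⟪y - x, ξ⟫ : ℝ) : ℂ))
          * Complex.exp (((-(‖(2 * π * hb) • ξ - w'.2‖ ^ 2) / hb : ℝ) : ℂ))) := by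
    intro ξ
    have hsplit : gaussianPS hb (((1/2:ℝ) • (x + y), (2 * π * hb) • ξ) - w')
        = ((π * hb) ^ (-(3:ℝ)) * Real.exp (-(‖(1/2:ℝ) • (x + y) - w'.1‖ ^ 2) / hb))
          * Real.exp (-(‖(2 * π * hb) • ξ - w'.2‖ ^ 2) / hb) := by
      rw [gaussianPS, Prod.fst_sub, Prod.snd_sub]
      rw [show (-(‖(1/2:ℝ) • (x + y) - w'.1‖ ^ 2 + ‖(2 * π * hb) • ξ - w'.2‖ ^ 2) / hb)
          = (-(‖(1/2:ℝ) • (x + y) - w'.1‖ ^ 2) / hb)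
            + (-(‖(2 * π * hb) • ξ - w'.2‖ ^ 2) / hb) by ring, Real.exp_add]
      ring
    rw [hsplit]
    push_cast
    ring
  simp_rw [step]
  rw [MeasureTheory.integral_const_mul, xi_integral hb hhb (y - x) w'.2]

instance : MeasureTheory.Measure.IsAddHaarMeasure (volume : Measure (E3 × E3)) :=
  MeasureTheory.Measure.prod.instIsAddHaarMeasure _ _

lemma gauss_pos (hb : ℝ) (hhb : 0 < hb) (z : E3 × E3) : 0 < gaussianPS hb z := by
  rw [gaussianPS]; positivity

lemma gauss_split (hb : ℝ) (x y : E3) (ξ : E3) (w' : E3 × E3) :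
    gaussianPS hb (((1/2:ℝ) • (x + y), (2 * π * hb) • ξ) - w')
      = ((π * hb) ^ (-(3:ℝ)) * Real.exp (-(‖(1/2:ℝ) • (x + y) - w'.1‖ ^ 2) / hb))
        * Real.exp (-(‖(2 * π * hb) • ξ - w'.2‖ ^ 2) / hb) := by
  rw [gaussianPS, Prod.fst_sub, Prod.snd_sub]
  rw [show (-(‖(1/2:ℝ) • (x + y) - w'.1‖ ^ 2 + ‖(2 * π * hb) • ξ - w'.2‖ ^ 2) / hb)
      = (-(‖(1/2:ℝ) • (x + y) - w'.1‖ ^ 2) / hb)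
        + (-(‖(2 * π * hb) • ξ - w'.2‖ ^ 2) / hb) by ring, Real.exp_add]
  ring

open scoped RealInnerProductSpace in
lemma norm_G (hb : ℝ) (hhb : 0 < hb) (x y : E3) (F : ℂ) (ξ : E3) (w' : E3 × E3) :
    ‖Complex.exp (-2 * π * Complex.I * ((⟪y - x, ξ⟫ : ℝ) : ℂ))
        * (((gaussianPS hb (((1/2:ℝ) • (x + y), (2 * π * hb) • ξ) - w') : ℝ) : ℂ) * F)‖
      = ((π * hb) ^ (-(3:ℝ)) * Real.exp (-(‖(1/2:ℝ) • (x + y) - w'.1‖ ^ 2) / hb))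
        * Real.exp (-(‖(2 * π * hb) • ξ - w'.2‖ ^ 2) / hb) * ‖F‖ := by
  rw [norm_mul, norm_mul, Complex.norm_exp]
  have h0 : (-2 * ↑π * Complex.I * ((⟪y - x, ξ⟫ : ℝ) : ℂ)).re = 0 := by simp
  rw [h0, Real.exp_zero, one_mul, Complex.norm_real, Real.norm_eq_abs,
    abs_of_pos (gauss_pos hb hhb _), gauss_split hb x y ξ w']

lemma base_gauss_integrable (hb : ℝ) (hhb : 0 < hb) :
    Integrable (fun ξ : E3 => Real.exp (-(4 * π^2 * hb) * ‖ξ‖^2)) := by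
  have h := (GaussianFourier.integrable_cexp_neg_mul_sq_norm_add
    (b := ((4 * π^2 * hb : ℝ) : ℂ)) (by rw [Complex.ofReal_re]; positivity)
    0 (0 : E3)).norm
  refine h.congr (Filter.Eventually.of_forall fun ξ => ?_)
  have harg : (-(((4 * π^2 * hb : ℝ)) : ℂ) * (‖ξ‖ : ℂ)^2
        + 0 * ((@inner ℝ _ _ (0 : E3) ξ : ℝ) : ℂ))
      = (((-(4 * π^2 * hb) * ‖ξ‖^2 : ℝ)) : ℂ) := by push_cast; ring
  show ‖Complex.exp _‖ = _
  rw [harg, Complex.norm_exp, Complex.ofReal_re]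

lemma gauss_shift_integrable (hb : ℝ) (hhb : 0 < hb) (p : E3) :
    Integrable (fun ξ : E3 => Real.exp (-(‖(2 * π * hb) • ξ - p‖ ^ 2) / hb)) := by
  have h : ∀ ξ : E3, Real.exp (-(4 * π^2 * hb) * ‖ξ - (2 * π * hb)⁻¹ • p‖^2)
      = Real.exp (-(‖(2 * π * hb) • ξ - p‖ ^ 2) / hb) := fun ξ => by
    rw [neg_div, smul_norm_id hb hhb, neg_mul]
  exact ((base_gauss_integrable hb hhb).comp_sub_right ((2 * π * hb)⁻¹ • p)).congr
    (Filter.Eventually.of_forall fun ξ => h ξ)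

lemma gauss_shift_integral (hb : ℝ) (hhb : 0 < hb) (p : E3) :
    (∫ ξ : E3, Real.exp (-(‖(2 * π * hb) • ξ - p‖ ^ 2) / hb))
      = ∫ ξ : E3, Real.exp (-(4 * π^2 * hb) * ‖ξ‖^2) := by
  have h : ∀ ξ : E3, Real.exp (-(‖(2 * π * hb) • ξ - p‖ ^ 2) / hb)
      = Real.exp (-(4 * π^2 * hb) * ‖ξ - (2 * π * hb)⁻¹ • p‖^2) := fun ξ => by
    rw [neg_div, smul_norm_id hb hhb, neg_mul]
  simp_rw [h]
  exact MeasureTheory.integral_sub_right_eq_self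
    (fun ξ : E3 => Real.exp (-(4 * π^2 * hb) * ‖ξ‖^2)) _

open scoped RealInnerProductSpace in
/-- The Wick quantization is the Weyl quantization of the Gaussian-mollified
symbol: the kernel `h⁻³ ∫ f(z) ψ_z(x) conj(ψ_z(y)) dz` of `Õp_f` equals the
Weyl kernel of `g_h * f`. -/
theorem wick_eq_weyl_of_mollified (hb : ℝ) (hhb : 0 < hb)
    (f : SchwartzMap (E3 × E3) ℂ) (x y : E3) :
    (((2 * π * hb) ^ (-(3 : ℝ)) : ℝ) : ℂ)
        * ∫ z : E3 × E3, f z * coherentState hb z x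
            * (starRingEnd ℂ) (coherentState hb z y)
      = weylKernel hb (fun w => ∫ w' : E3 × E3,
          ((gaussianPS hb (w - w') : ℝ) : ℂ) * f w') x y := by
  have hG : Integrable (Function.uncurry (fun (ξ : E3) (w' : E3 × E3) =>
      Complex.exp (-2 * π * Complex.I * ((⟪y - x, ξ⟫ : ℝ) : ℂ))
        * (((gaussianPS hb (((1/2:ℝ) • (x + y), (2 * π * hb) • ξ) - w') : ℝ) : ℂ) * f w')))
      (volume.prod volume) := by
    have hgc : Continuous (gaussianPS hb) := by
      unfold gaussianPS; fun_prop
    have hcont : Continuous (Function.uncurry (fun (ξ : E3) (w' : E3 × E3) =>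
        Complex.exp (-2 * π * Complex.I * ((⟪y - x, ξ⟫ : ℝ) : ℂ))
          * (((gaussianPS hb (((1/2:ℝ) • (x + y), (2 * π * hb) • ξ) - w') : ℝ) : ℂ) * f w'))) := by
      have hmap : Continuous (fun a : E3 × (E3 × E3) =>
          (((1/2:ℝ) • (x + y), (2 * π * hb) • a.1) - a.2)) := by fun_prop
      have hphase : Continuous (fun a : E3 × (E3 × E3) =>
          Complex.exp (-2 * π * Complex.I * ((⟪y - x, a.1⟫ : ℝ) : ℂ))) := by
        apply Complex.continuous_exp.comp
        apply Continuous.mul continuous_const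
        exact Complex.continuous_ofReal.comp (Continuous.inner continuous_const continuous_fst)
      exact hphase.mul ((Complex.continuous_ofReal.comp (hgc.comp hmap)).mul
        (f.continuous.comp continuous_snd))
    rw [MeasureTheory.integrable_prod_iff' hcont.aestronglyMeasurable]
    constructor
    · refine Filter.Eventually.of_forall fun w' => ?_
      simp only [Function.uncurry_apply_pair]
      have hbnd := ((gauss_shift_integrable hb hhb w'.2).const_mul
        (((π * hb) ^ (-(3:ℝ)) * Real.exp (-(‖(1/2:ℝ) • (x + y) - w'.1‖ ^ 2) / hb)) * ‖f w'‖))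
      refine hbnd.mono' ?_ ?_
      · exact (hcont.comp (continuous_id.prodMk continuous_const)).aestronglyMeasurable
      · refine Filter.Eventually.of_forall fun ξ => ?_
        rw [norm_G hb hhb x y (f w') ξ w']
        exact le_of_eq (by ring)
    · simp only [Function.uncurry_apply_pair]
      have hval : (fun w' : E3 × E3 => ∫ ξ : E3,
          ‖Complex.exp (-2 * π * Complex.I * ((⟪y - x, ξ⟫ : ℝ) : ℂ))
            * (((gaussianPS hb (((1/2:ℝ) • (x + y), (2 * π * hb) • ξ) - w') : ℝ) : ℂ) * f w')‖)
          = fun w' : E3 × E3 =>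
            ((π * hb) ^ (-(3:ℝ)) * Real.exp (-(‖(1/2:ℝ) • (x + y) - w'.1‖ ^ 2) / hb)) * ‖f w'‖
              * ∫ ξ : E3, Real.exp (-(4 * π^2 * hb) * ‖ξ‖^2) := by
        funext w'
        simp_rw [norm_G hb hhb x y (f w')]
        rw [show (fun ξ : E3 => ((π * hb) ^ (-(3:ℝ))
              * Real.exp (-(‖(1/2:ℝ) • (x + y) - w'.1‖ ^ 2) / hb))
            * Real.exp (-(‖(2 * π * hb) • ξ - w'.2‖ ^ 2) / hb) * ‖f w'‖)
          = (fun ξ : E3 => (((π * hb) ^ (-(3:ℝ))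
              * Real.exp (-(‖(1/2:ℝ) • (x + y) - w'.1‖ ^ 2) / hb)) * ‖f w'‖)
            * Real.exp (-(‖(2 * π * hb) • ξ - w'.2‖ ^ 2) / hb)) from funext fun ξ => by ring]
        rw [MeasureTheory.integral_const_mul, gauss_shift_integral hb hhb w'.2]
      rw [hval]
      set K0 : ℝ := ∫ ξ : E3, Real.exp (-(4 * π^2 * hb) * ‖ξ‖^2) with hK0
      have hK0nn : 0 ≤ K0 := MeasureTheory.integral_nonneg fun ξ => (Real.exp_pos _).le
      have hbnd2 := (f.integrable (μ := volume)).norm.const_mul ((π * hb) ^ (-(3:ℝ)) * K0)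
      refine hbnd2.mono' ?_ ?_
      · apply Continuous.aestronglyMeasurable
        fun_prop
      · refine Filter.Eventually.of_forall fun w' => ?_
        have hrp : (0:ℝ) < (π * hb) ^ (-(3:ℝ)) := by positivity
        have he1 : Real.exp (-(‖(1/2:ℝ) • (x + y) - w'.1‖ ^ 2) / hb) ≤ 1 := by
          rw [Real.exp_le_one_iff]
          exact div_nonpos_of_nonpos_of_nonneg (neg_nonpos.mpr (by positivity)) hhb.le
        rw [Real.norm_eq_abs, abs_of_nonneg (by positivity)]
        calc (π * hb) ^ (-(3:ℝ)) * Real.exp (-(‖(1/2:ℝ) • (x + y) - w'.1‖ ^ 2) / hb)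
              * ‖f w'‖ * K0
            ≤ (π * hb) ^ (-(3:ℝ)) * 1 * ‖f w'‖ * K0 := by
              gcongr
          _ = (π * hb) ^ (-(3:ℝ)) * K0 * ‖f w'‖ := by ring
  rw [show weylKernel hb (fun w => ∫ w' : E3 × E3,
        ((gaussianPS hb (w - w') : ℝ) : ℂ) * f w') x y
      = ∫ ξ : E3, ∫ w' : E3 × E3,
          Complex.exp (-2 * π * Complex.I * ((⟪y - x, ξ⟫ : ℝ) : ℂ))
            * (((gaussianPS hb (((1/2:ℝ) • (x + y), (2 * π * hb) • ξ) - w') : ℝ) : ℂ) * f w')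
      from by
        unfold weylKernel
        exact MeasureTheory.integral_congr_ae (Filter.Eventually.of_forall fun ξ =>
          (MeasureTheory.integral_const_mul _ _).symm)]
  rw [MeasureTheory.integral_integral_swap hG]
  simp_rw [inner_int hb hhb x y]
  rw [← MeasureTheory.integral_const_mul]
  exact MeasureTheory.integral_congr_ae (Filter.Eventually.of_forall fun z =>
    pointwise_key hb hhb x y z (f z))
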